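/- For 0 ≤ s ≤ 1/2, the Birkhoff flow S_B(t,ζ) = (ζ_n e^{i t ω_n(ζ)})_{n≥1} defines for each t ∈ ℝ a norm-preserving homeomorphism of h^{1/2−s}_+, the curve t ↦ S_B(t,ζ) is continuous into h^{1/2−s}_+ for each ζ, and for each T > 0 the map ζ ↦ S_B(·,ζ) is continuous from h^{1/2−s}_+ into C([−T,T], h^{1/2−s}_+). Moreover S_B satisfies the group property S_B(t₁, S_B(t₂,ζ)) = S_B(t₁+t₂, ζ). -/

import Mathlib

noncomputable section

open scoped BigOperators

/-- Membership of `h^t_+`: sequences indexed by `k : ℕ` (the mode `k+1 ≥ 1`)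
with `∑ (k+1)^{2t} |ζ_k|² < ∞`. -/
def hMem (t : ℝ) (ζ : ℕ → ℂ) : Prop :=
  Summable fun k : ℕ => ((k : ℝ) + 1) ^ (2 * t) * ‖ζ k‖ ^ 2

/-- The `h^t_+` norm. -/
def hNorm (t : ℝ) (ζ : ℕ → ℂ) : ℝ :=
  Real.sqrt (∑' k : ℕ, ((k : ℝ) + 1) ^ (2 * t) * ‖ζ k‖ ^ 2)

/-- The Benjamin–Ono frequency `ω_n(ζ) = n² − 2 ∑_{k≥1} min(n,k)|ζ_k|²`. -/
def omegaBO (n : ℕ) (ζ : ℕ → ℂ) : ℝ :=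
  (n : ℝ) ^ 2 - 2 * ∑' k : ℕ, min (n : ℝ) ((k : ℝ) + 1) * ‖ζ k‖ ^ 2

/-- The Birkhoff flow `S_B(τ,ζ)_n = ζ_n e^{i τ ω_n(ζ)}` (mode `n = k+1`). -/
def SBflow (τ : ℝ) (ζ : ℕ → ℂ) : ℕ → ℂ :=
  fun k => ζ k * Complex.exp (Complex.I * ((omegaBO (k + 1) ζ * τ : ℝ) : ℂ))

namespace SBaux

lemma wpos (t : ℝ) (k : ℕ) : 0 < ((k : ℝ) + 1) ^ (2 * t) :=
  Real.rpow_pos_of_pos (by positivity) _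

lemma wone (t : ℝ) (ht : 0 ≤ t) (k : ℕ) : 1 ≤ ((k : ℝ) + 1) ^ (2 * t) := by
  have h1 : (1:ℝ) ≤ (k:ℝ)+1 := by linarith [Nat.cast_nonneg (α := ℝ) k]
  calc (1:ℝ) = ((k:ℝ)+1) ^ (0:ℝ) := by simp
  _ ≤ _ := Real.rpow_le_rpow_of_exponent_le h1 (by linarith)

lemma norm_exp_I_mul (r : ℝ) : ‖Complex.exp (Complex.I * (r : ℂ))‖ = 1 := by
  rw [Complex.norm_exp]
  simp [Complex.mul_re]

lemma norm_SBflow (τ : ℝ) (ζ : ℕ → ℂ) (k : ℕ) : ‖SBflow τ ζ k‖ = ‖ζ k‖ := by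
  rw [SBflow, norm_mul, norm_exp_I_mul, mul_one]

lemma norm_exp_sub_one_le (x : ℝ) :
    ‖Complex.exp (Complex.I * (x : ℂ)) - 1‖ ≤ 2 * |x| := by
  rcases le_or_gt |x| 1 with h | h
  · have h1 : ‖Complex.I * (x : ℂ)‖ = |x| := by
      simp
    have := Complex.norm_exp_sub_one_le (x := Complex.I * (x : ℂ)) (by rw [h1]; exact h)
    rw [h1] at this
    exact this
  · have h2 : ‖Complex.exp (Complex.I * (x : ℂ)) - 1‖ ≤ 2 := by
      calc ‖Complex.exp (Complex.I * (x : ℂ)) - 1‖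
          ≤ ‖Complex.exp (Complex.I * (x : ℂ))‖ + ‖(1:ℂ)‖ := norm_sub_le _ _
        _ = 2 := by rw [norm_exp_I_mul]; norm_num
    linarith

lemma norm_exp_sub_exp_le (a b : ℝ) :
    ‖Complex.exp (Complex.I * (a:ℂ)) - Complex.exp (Complex.I * (b:ℂ))‖ ≤ 2 * |a - b| := by
  have h1 : Complex.exp (Complex.I * (a:ℂ)) - Complex.exp (Complex.I * (b:ℂ))
      = Complex.exp (Complex.I * (b:ℂ)) * (Complex.exp (Complex.I * (((a-b : ℝ)):ℂ)) - 1) := by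
    rw [mul_sub, mul_one, ← Complex.exp_add]
    push_cast
    ring_nf
  rw [h1, norm_mul, norm_exp_I_mul, one_mul]
  exact norm_exp_sub_one_le _

lemma norm_exp_sub_exp_le_two (a b : ℝ) :
    ‖Complex.exp (Complex.I * (a:ℂ)) - Complex.exp (Complex.I * (b:ℂ))‖ ≤ 2 := by
  calc ‖Complex.exp (Complex.I * (a:ℂ)) - Complex.exp (Complex.I * (b:ℂ))‖
      ≤ ‖Complex.exp (Complex.I * (a:ℂ))‖ + ‖Complex.exp (Complex.I * (b:ℂ))‖ := norm_sub_le _ _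
    _ = 2 := by rw [norm_exp_I_mul, norm_exp_I_mul]; norm_num

lemma exists_tail_small (F : ℕ → ℝ) {r : ℝ} (hr : 0 < r) :
    ∃ N : ℕ, ∑' k, F (k + N) < r := by
  have h := tendsto_sum_nat_add F
  rcases Metric.tendsto_atTop.mp h r hr with ⟨N, hN⟩
  refine ⟨N, ?_⟩
  have := hN N le_rfl
  rw [Real.dist_eq, sub_zero] at this
  exact lt_of_abs_lt this

lemma omega_SBflow (τ : ℝ) (ζ : ℕ → ℂ) (n : ℕ) :
    omegaBO n (SBflow τ ζ) = omegaBO n ζ := by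
  unfold omegaBO
  congr 2
  exact tsum_congr fun k => by rw [norm_SBflow]

lemma summable_sq {t : ℝ} (ht : 0 ≤ t) {ζ : ℕ → ℂ} (h : hMem t ζ) :
    Summable fun k => ‖ζ k‖ ^ 2 :=
  h.of_nonneg_of_le (fun k => by positivity)
    (fun k => le_mul_of_one_le_left (by positivity) (wone t ht k))

lemma hMem_sub {t : ℝ} {ζ ζ' : ℕ → ℂ} (h : hMem t ζ) (h' : hMem t ζ') :
    hMem t (ζ' - ζ) := by
  refine ((h'.mul_left 2).add (h.mul_left 2)).of_nonneg_of_le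
    (fun k => by positivity) (fun k => ?_)
  simp only [Pi.sub_apply]
  have h1 : ‖ζ' k - ζ k‖ ≤ ‖ζ' k‖ + ‖ζ k‖ := norm_sub_le _ _
  have h2 : ‖ζ' k - ζ k‖ ^ 2 ≤ 2 * ‖ζ' k‖ ^ 2 + 2 * ‖ζ k‖ ^ 2 := by
    nlinarith [h1, sq_nonneg (‖ζ' k‖ - ‖ζ k‖), norm_nonneg (ζ' k - ζ k), norm_nonneg (ζ' k), norm_nonneg (ζ k)]
  have hw := (wpos t k).le
  nlinarith [mul_le_mul_of_nonneg_left h2 hw]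

lemma omega_diff {t : ℝ} (ht : 0 ≤ t) {ζ ζ' : ℕ → ℂ} (h : hMem t ζ) (h' : hMem t ζ') (n : ℕ) :
    |omegaBO n ζ' - omegaBO n ζ|
      ≤ 2 * n * ∑' j : ℕ, ((j:ℝ)+1) ^ (2*t) * |‖ζ' j‖ ^ 2 - ‖ζ j‖ ^ 2| := by
  have ha := summable_sq ht h
  have ha' := summable_sq ht h'
  have hm : ∀ (ξ : ℕ → ℂ), Summable (fun j : ℕ => ‖ξ j‖^2) →
      Summable fun j : ℕ => min (n : ℝ) ((j:ℝ)+1) * ‖ξ j‖ ^ 2 := by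
    intro ξ hξ
    refine (hξ.mul_left (n:ℝ)).of_nonneg_of_le (fun j : ℕ => ?_) (fun j : ℕ => ?_)
    · have : (0:ℝ) ≤ min (n : ℝ) ((j:ℝ)+1) := le_min (by positivity) (by positivity)
      positivity
    · exact mul_le_mul_of_nonneg_right (min_le_left _ _) (by positivity)
  have hsub : Summable fun j : ℕ => min (n : ℝ) ((j:ℝ)+1) * (‖ζ' j‖ ^ 2 - ‖ζ j‖ ^ 2) := by
    have := (hm ζ' ha').sub (hm ζ ha)
    simpa [mul_sub] using this
  have key : omegaBO n ζ' - omegaBO n ζ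
      = -2 * ∑' j : ℕ, min (n : ℝ) ((j:ℝ)+1) * (‖ζ' j‖ ^ 2 - ‖ζ j‖ ^ 2) := by
    unfold omegaBO
    have e1 : ∑' j : ℕ, min (n:ℝ) ((j:ℝ)+1) * (‖ζ' j‖ ^ 2 - ‖ζ j‖ ^ 2)
        = (∑' j : ℕ, min (n:ℝ) ((j:ℝ)+1) * ‖ζ' j‖ ^ 2)
          - ∑' j : ℕ, min (n:ℝ) ((j:ℝ)+1) * ‖ζ j‖ ^ 2 := by
      rw [← Summable.tsum_sub (hm ζ' ha') (hm ζ ha)]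
      exact tsum_congr fun j => by ring
    rw [e1]; ring
  rw [key, abs_mul]
  have habs : |∑' j : ℕ, min (n:ℝ) ((j:ℝ)+1) * (‖ζ' j‖ ^ 2 - ‖ζ j‖ ^ 2)|
      ≤ ∑' j : ℕ, (n:ℝ) * (((j:ℝ)+1) ^ (2*t) * |‖ζ' j‖ ^ 2 - ‖ζ j‖ ^ 2|) := by
    have hb : Summable fun j : ℕ => (n:ℝ) * (((j:ℝ)+1) ^ (2*t) * |‖ζ' j‖ ^ 2 - ‖ζ j‖ ^ 2|) := by
      refine ((h'.add h).mul_left (n:ℝ)).of_nonneg_of_le (fun j => ?_) (fun j => ?_)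
      · have := (wpos t j).le; positivity
      · have hw := (wpos t j).le
        have : |‖ζ' j‖ ^ 2 - ‖ζ j‖ ^ 2| ≤ ‖ζ' j‖ ^ 2 + ‖ζ j‖ ^ 2 := by
          rw [abs_sub_le_iff]; constructor <;> nlinarith [norm_nonneg (ζ' j), norm_nonneg (ζ j)]
        have h2 : ((j:ℝ)+1) ^ (2*t) * |‖ζ' j‖ ^ 2 - ‖ζ j‖ ^ 2|
            ≤ ((j:ℝ)+1) ^ (2*t) * ‖ζ' j‖ ^ 2 + ((j:ℝ)+1) ^ (2*t) * ‖ζ j‖ ^ 2 := by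
          nlinarith [mul_le_mul_of_nonneg_left this hw]
        exact mul_le_mul_of_nonneg_left h2 (Nat.cast_nonneg n)
    calc |∑' j : ℕ, min (n:ℝ) ((j:ℝ)+1) * (‖ζ' j‖ ^ 2 - ‖ζ j‖ ^ 2)|
        ≤ ∑' j : ℕ, |min (n:ℝ) ((j:ℝ)+1) * (‖ζ' j‖ ^ 2 - ‖ζ j‖ ^ 2)| := by
          simpa only [Real.norm_eq_abs] using norm_tsum_le_tsum_norm (f := fun j : ℕ =>
            min (n:ℝ) ((j:ℝ)+1) * (‖ζ' j‖ ^ 2 - ‖ζ j‖ ^ 2)) (by simpa only [Real.norm_eq_abs] using hsub.abs)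
      _ ≤ ∑' j : ℕ, (n:ℝ) * (((j:ℝ)+1) ^ (2*t) * |‖ζ' j‖ ^ 2 - ‖ζ j‖ ^ 2|) := by
          refine Summable.tsum_le_tsum (fun j => ?_) hsub.abs hb
          rw [abs_mul]
          have hmn : |min (n:ℝ) ((j:ℝ)+1)| ≤ (n:ℝ) * ((j:ℝ)+1) ^ (2*t) := by
            rw [abs_of_nonneg (le_min (Nat.cast_nonneg n) (by positivity))]
            calc min (n:ℝ) ((j:ℝ)+1) ≤ (n:ℝ) := min_le_left _ _
            _ = (n:ℝ) * 1 := (mul_one _).symm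
            _ ≤ (n:ℝ) * ((j:ℝ)+1) ^ (2*t) := by
                exact mul_le_mul_of_nonneg_left (wone t ht j) (Nat.cast_nonneg n)
          calc |min (n:ℝ) ((j:ℝ)+1)| * |‖ζ' j‖ ^ 2 - ‖ζ j‖ ^ 2|
              ≤ (n:ℝ) * ((j:ℝ)+1) ^ (2*t) * |‖ζ' j‖ ^ 2 - ‖ζ j‖ ^ 2| :=
                mul_le_mul_of_nonneg_right hmn (abs_nonneg _)
            _ = (n:ℝ) * (((j:ℝ)+1) ^ (2*t) * |‖ζ' j‖ ^ 2 - ‖ζ j‖ ^ 2|) := by ring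
  rw [tsum_mul_left] at habs
  have : |(-2 : ℝ)| = 2 := by norm_num
  rw [this]
  nlinarith [habs, abs_nonneg (∑' j : ℕ, min (n:ℝ) ((j:ℝ)+1) * (‖ζ' j‖ ^ 2 - ‖ζ j‖ ^ 2))]

lemma Q_le {t : ℝ} {ζ ζ' : ℕ → ℂ} (h : hMem t ζ) (h' : hMem t ζ') {η : ℝ} (hη : 0 < η) :
    (Summable fun j : ℕ => ((j:ℝ)+1) ^ (2*t) * |‖ζ' j‖ ^ 2 - ‖ζ j‖ ^ 2|) ∧
    ∑' j : ℕ, ((j:ℝ)+1) ^ (2*t) * |‖ζ' j‖ ^ 2 - ‖ζ j‖ ^ 2|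
      ≤ η * (∑' k : ℕ, ((k:ℝ)+1) ^ (2*t) * ‖ζ k‖ ^ 2)
        + (1 + 1/η) * ∑' k : ℕ, ((k:ℝ)+1) ^ (2*t) * ‖(ζ' - ζ) k‖ ^ 2 := by
  have hd : hMem t (ζ' - ζ) := hMem_sub h h'
  have hpt : ∀ j : ℕ, ((j:ℝ)+1) ^ (2*t) * |‖ζ' j‖ ^ 2 - ‖ζ j‖ ^ 2|
      ≤ η * (((j:ℝ)+1) ^ (2*t) * ‖ζ j‖ ^ 2) + (1 + 1/η) * (((j:ℝ)+1) ^ (2*t) * ‖(ζ' - ζ) j‖ ^ 2) := by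
    intro j
    set b' := ‖ζ' j‖
    set b := ‖ζ j‖
    set c := ‖ζ' j - ζ j‖ with hc
    have hcc : ‖(ζ' - ζ) j‖ = c := by simp [hc]
    rw [hcc]
    have h1 : |b' - b| ≤ c := abs_norm_sub_norm_le (ζ' j) (ζ j)
    have hbnn : 0 ≤ b := norm_nonneg _
    have hbnn' : 0 ≤ b' := norm_nonneg _
    have hcnn : 0 ≤ c := norm_nonneg _
    have step1 : |b' ^ 2 - b ^ 2| ≤ (2*b + c) * c := by
      have e1 : |b' ^ 2 - b ^ 2| = (b' + b) * |b' - b| := by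
        rw [show b' ^ 2 - b ^ 2 = (b' + b) * (b' - b) by ring, abs_mul,
          abs_of_nonneg (by linarith)]
      rw [e1]
      have hb'b : b' + b ≤ 2*b + c := by
        have := le_abs_self (b' - b)
        linarith
      nlinarith [abs_nonneg (b' - b)]
    have hu : η * (1/η) = 1 := by field_simp
    have step2 : (2*b + c) * c ≤ η * b ^ 2 + (1 + 1/η) * c ^ 2 := by
      nlinarith [sq_nonneg (η * b - c), hη]
    have hw := (wpos t j).le
    have := mul_le_mul_of_nonneg_left (step1.trans step2) hw
    nlinarith [this]
  have hsumR : Summable fun j : ℕ => η * (((j:ℝ)+1) ^ (2*t) * ‖ζ j‖ ^ 2)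
      + (1 + 1/η) * (((j:ℝ)+1) ^ (2*t) * ‖(ζ' - ζ) j‖ ^ 2) :=
    (h.mul_left η).add (hd.mul_left (1 + 1/η))
  have hsumL : Summable fun j : ℕ => ((j:ℝ)+1) ^ (2*t) * |‖ζ' j‖ ^ 2 - ‖ζ j‖ ^ 2| :=
    hsumR.of_nonneg_of_le (fun j => by have := (wpos t j).le; positivity) hpt
  refine ⟨hsumL, ?_⟩
  calc ∑' j : ℕ, ((j:ℝ)+1) ^ (2*t) * |‖ζ' j‖ ^ 2 - ‖ζ j‖ ^ 2|
      ≤ ∑' j : ℕ, (η * (((j:ℝ)+1) ^ (2*t) * ‖ζ j‖ ^ 2)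
        + (1 + 1/η) * (((j:ℝ)+1) ^ (2*t) * ‖(ζ' - ζ) j‖ ^ 2)) := Summable.tsum_le_tsum hpt hsumL hsumR
    _ = _ := by
      rw [Summable.tsum_add (h.mul_left η) (hd.mul_left (1 + 1/η)), tsum_mul_left, tsum_mul_left]

lemma sq_add_le {c u d : ℝ} (hc : 0 ≤ c) (hu : 0 ≤ u) (hd : 0 ≤ d) (h : d ≤ c + u) :
    d ^ 2 ≤ 2 * c ^ 2 + 2 * u ^ 2 := by nlinarith [sq_nonneg (c - u)]

lemma tsum_split_lt {F G : ℕ → ℝ} (hF : Summable F) (hGnn : ∀ k, 0 ≤ G k)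
    (hG4 : ∀ k, G k ≤ 4 * F k) {N : ℕ} {a b : ℝ}
    (hhead : ∑ k ∈ Finset.range N, G k ≤ a) (htail : ∑' k, F (k + N) < b) :
    ∑' k, G k < a + 4 * b := by
  have hGs : Summable G := (hF.mul_left 4).of_nonneg_of_le hGnn hG4
  rw [← Summable.sum_add_tsum_nat_add N hGs]
  have h2 : ∑' k, G (k + N) ≤ 4 * ∑' k, F (k + N) := by
    calc ∑' k, G (k + N)
        ≤ ∑' k, 4 * F (k + N) :=
          Summable.tsum_le_tsum (fun k => hG4 _) ((summable_nat_add_iff N).mpr hGs)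
            ((summable_nat_add_iff N).mpr (hF.mul_left 4))
      _ = 4 * ∑' k, F (k + N) := tsum_mul_left
  linarith

end SBaux

set_option maxHeartbeats 2000000 in
/-- For `0 ≤ s ≤ 1/2` the Birkhoff flow `S_B` preserves `h^{1/2−s}_+` and its
norm, satisfies `S_B(0,·) = id` and the group property (hence each `S_B(τ,·)`
is a norm-preserving homeomorphism of `h^{1/2−s}_+`), each trajectory
`τ ↦ S_B(τ,ζ)` is continuous, and `ζ ↦ S_B(·,ζ)` is continuous into
`C([−T,T], h^{1/2−s}_+)` for every `T > 0`. -/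
theorem stmt15 (s : ℝ) (hs0 : 0 ≤ s) (hs : s ≤ 1 / 2) :
    (∀ ζ : ℕ → ℂ, hMem (1 / 2 - s) ζ → ∀ τ : ℝ,
      hMem (1 / 2 - s) (SBflow τ ζ) ∧ hNorm (1 / 2 - s) (SBflow τ ζ) = hNorm (1 / 2 - s) ζ) ∧
    (∀ ζ : ℕ → ℂ, hMem (1 / 2 - s) ζ → SBflow 0 ζ = ζ) ∧
    (∀ ζ : ℕ → ℂ, hMem (1 / 2 - s) ζ → ∀ τ₁ τ₂ : ℝ,
      SBflow τ₁ (SBflow τ₂ ζ) = SBflow (τ₁ + τ₂) ζ) ∧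
    (∀ ζ : ℕ → ℂ, hMem (1 / 2 - s) ζ → ∀ τ₀ : ℝ, ∀ ε > (0 : ℝ), ∃ δ > (0 : ℝ), ∀ τ : ℝ,
      |τ - τ₀| < δ → hNorm (1 / 2 - s) (SBflow τ ζ - SBflow τ₀ ζ) < ε) ∧
    (∀ T > (0 : ℝ), ∀ ζ : ℕ → ℂ, hMem (1 / 2 - s) ζ → ∀ ε > (0 : ℝ), ∃ δ > (0 : ℝ),
      ∀ ζ' : ℕ → ℂ, hMem (1 / 2 - s) ζ' → hNorm (1 / 2 - s) (ζ' - ζ) < δ →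
        ∀ τ : ℝ, |τ| ≤ T → hNorm (1 / 2 - s) (SBflow τ ζ' - SBflow τ ζ) < ε) := by
  refine ⟨fun ζ hζ τ => ⟨?_, ?_⟩, fun ζ _ => ?_, fun ζ _ τ₁ τ₂ => ?_, ?_, ?_⟩
  · exact (summable_congr fun k => by rw [SBaux.norm_SBflow]).mpr hζ
  · unfold hNorm
    congr 1
    exact tsum_congr fun k => by rw [SBaux.norm_SBflow]
  · funext k
    simp [SBflow]
  · funext k
    simp only [SBflow, SBaux.omega_SBflow]
    rw [mul_assoc, ← Complex.exp_add]
    congr 1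
    push_cast
    ring
  · intro ζ hζ τ₀ ε hε
    set F : ℕ → ℝ := fun k => ((k:ℝ)+1) ^ (2*(1/2 - s)) * ‖ζ k‖ ^ 2 with hFdef
    have hF : Summable F := hζ
    have hFnn : ∀ k, 0 ≤ F k := fun k => by
      have := (SBaux.wpos (1/2 - s) k).le; positivity
    obtain ⟨N, hN⟩ := SBaux.exists_tail_small F (show (0:ℝ) < ε^2/16 by positivity)
    set C : ℝ := (∑ k ∈ Finset.range N, F k * (2*|omegaBO (k+1) ζ|) ^ 2) + 1 with hCdef
    have hCsum : 0 ≤ ∑ k ∈ Finset.range N, F k * (2*|omegaBO (k+1) ζ|) ^ 2 :=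
      Finset.sum_nonneg fun k _ => mul_nonneg (hFnn k) (by positivity)
    have hC : 0 < C := by rw [hCdef]; linarith
    refine ⟨Real.sqrt (ε^2/(4*C)), Real.sqrt_pos.mpr (by positivity), fun τ hτ => ?_⟩
    set δ := Real.sqrt (ε^2/(4*C)) with hδdef
    have hδsq : δ^2 = ε^2/(4*C) := Real.sq_sqrt (by positivity)
    have hδnn : 0 ≤ δ := Real.sqrt_nonneg _
    have hτδ : |τ - τ₀| ≤ δ := hτ.le
    set G : ℕ → ℝ := fun k => ((k:ℝ)+1) ^ (2*(1/2 - s)) * ‖(SBflow τ ζ - SBflow τ₀ ζ) k‖ ^ 2 with hGdef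
    have hGnn : ∀ k, 0 ≤ G k := fun k => by
      have := (SBaux.wpos (1/2 - s) k).le; positivity
    have hGF : ∀ k, G k = F k * ‖Complex.exp (Complex.I * ((omegaBO (k+1) ζ * τ : ℝ):ℂ))
        - Complex.exp (Complex.I * ((omegaBO (k+1) ζ * τ₀ : ℝ):ℂ))‖ ^ 2 := by
      intro k
      simp only [hGdef, hFdef, Pi.sub_apply, SBflow]
      rw [← mul_sub, norm_mul, mul_pow]
      ring
    have hG4 : ∀ k, G k ≤ 4 * F k := by
      intro k
      rw [hGF k]
      have h2 := SBaux.norm_exp_sub_exp_le_two (omegaBO (k+1) ζ * τ) (omegaBO (k+1) ζ * τ₀)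
      have h0 := norm_nonneg (Complex.exp (Complex.I * ((omegaBO (k+1) ζ * τ : ℝ):ℂ))
        - Complex.exp (Complex.I * ((omegaBO (k+1) ζ * τ₀ : ℝ):ℂ)))
      have hM2 : ‖Complex.exp (Complex.I * ((omegaBO (k+1) ζ * τ : ℝ):ℂ))
          - Complex.exp (Complex.I * ((omegaBO (k+1) ζ * τ₀ : ℝ):ℂ))‖ ^ 2 ≤ 4 := by nlinarith
      have := mul_le_mul_of_nonneg_left hM2 (hFnn k)
      linarith
    have hhead : ∀ k, G k ≤ F k * (2*|omegaBO (k+1) ζ|) ^ 2 * δ^2 := by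
      intro k
      rw [hGF k]
      have h1 := SBaux.norm_exp_sub_exp_le (omegaBO (k+1) ζ * τ) (omegaBO (k+1) ζ * τ₀)
      have e1 : 2 * |omegaBO (k+1) ζ * τ - omegaBO (k+1) ζ * τ₀|
          = 2 * |omegaBO (k+1) ζ| * |τ - τ₀| := by
        rw [show omegaBO (k+1) ζ * τ - omegaBO (k+1) ζ * τ₀ = omegaBO (k+1) ζ * (τ - τ₀) by ring,
          abs_mul]
        ring
      rw [e1] at h1
      have h2 : ‖Complex.exp (Complex.I * ((omegaBO (k+1) ζ * τ : ℝ):ℂ))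
          - Complex.exp (Complex.I * ((omegaBO (k+1) ζ * τ₀ : ℝ):ℂ))‖ ≤ 2*|omegaBO (k+1) ζ| * δ := by
        calc ‖Complex.exp (Complex.I * ((omegaBO (k+1) ζ * τ : ℝ):ℂ))
            - Complex.exp (Complex.I * ((omegaBO (k+1) ζ * τ₀ : ℝ):ℂ))‖
            ≤ 2 * |omegaBO (k+1) ζ| * |τ - τ₀| := h1
          _ ≤ 2*|omegaBO (k+1) ζ| * δ := by
              have := abs_nonneg (omegaBO (k+1) ζ)
              nlinarith
      have h0 := norm_nonneg (Complex.exp (Complex.I * ((omegaBO (k+1) ζ * τ : ℝ):ℂ))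
        - Complex.exp (Complex.I * ((omegaBO (k+1) ζ * τ₀ : ℝ):ℂ)))
      have h3 : ‖Complex.exp (Complex.I * ((omegaBO (k+1) ζ * τ : ℝ):ℂ))
          - Complex.exp (Complex.I * ((omegaBO (k+1) ζ * τ₀ : ℝ):ℂ))‖ ^ 2
          ≤ (2*|omegaBO (k+1) ζ|) ^ 2 * δ^2 := by nlinarith [abs_nonneg (omegaBO (k+1) ζ)]
      have := mul_le_mul_of_nonneg_left h3 (hFnn k)
      nlinarith
    have hheadsum : ∑ k ∈ Finset.range N, G k ≤ ε^2/4 := by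
      calc ∑ k ∈ Finset.range N, G k
          ≤ ∑ k ∈ Finset.range N, F k * (2*|omegaBO (k+1) ζ|) ^ 2 * δ^2 :=
            Finset.sum_le_sum fun k _ => hhead k
        _ = (∑ k ∈ Finset.range N, F k * (2*|omegaBO (k+1) ζ|) ^ 2) * δ^2 := by
            rw [← Finset.sum_mul]
        _ ≤ C * δ^2 := by nlinarith [sq_nonneg δ]
        _ = ε^2/4 := by rw [hδsq]; field_simp
    have htot : ∑' k, G k < ε^2/4 + 4*(ε^2/16) := SBaux.tsum_split_lt hF hGnn hG4 hheadsum hN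
    have hfin : ∑' k, G k < ε^2 := by linarith [pow_pos hε 2]
    have hid : hNorm (1/2 - s) (SBflow τ ζ - SBflow τ₀ ζ) = Real.sqrt (∑' k, G k) := rfl
    rw [hid]
    exact (Real.sqrt_lt' hε).mpr hfin
  · intro T hT ζ hζ ε hε
    have ht : (0:ℝ) ≤ 1/2 - s := by linarith
    set F : ℕ → ℝ := fun k => ((k:ℝ)+1) ^ (2*(1/2 - s)) * ‖ζ k‖ ^ 2 with hFdef
    have hF : Summable F := hζ
    have hFnn : ∀ k, 0 ≤ F k := fun k => by
      rw [hFdef]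
      have := (SBaux.wpos (1/2 - s) k).le
      positivity
    clear_value F
    have hS : 0 ≤ ∑' k, F k := tsum_nonneg hFnn
    obtain ⟨S, hSdef⟩ : ∃ x : ℝ, x = ∑' k, F k := ⟨_, rfl⟩
    rw [← hSdef] at hS
    obtain ⟨N, hN⟩ := SBaux.exists_tail_small F (show (0:ℝ) < ε^2/64 by positivity)
    have hCsum : 0 ≤ ∑ k ∈ Finset.range N, F k * (4*T*((k:ℝ)+1)) ^ 2 :=
      Finset.sum_nonneg fun k _ => mul_nonneg (hFnn k) (by positivity)
    obtain ⟨C, hCdef⟩ : ∃ x : ℝ, x = (∑ k ∈ Finset.range N, F k * (4*T*((k:ℝ)+1)) ^ 2) + 1 :=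
      ⟨_, rfl⟩
    have hC : 0 < C := by rw [hCdef]; linarith
    have hC4 : (0:ℝ) < ε^2/(4*C) := div_pos (pow_pos hε 2) (by linarith)
    obtain ⟨r, hrdef⟩ : ∃ x : ℝ, x = Real.sqrt (ε^2/(4*C)) := ⟨_, rfl⟩
    have hr : 0 < r := by rw [hrdef]; exact Real.sqrt_pos.mpr hC4
    have hrsq : r^2 = ε^2/(4*C) := by rw [hrdef]; exact Real.sq_sqrt hC4.le
    obtain ⟨η, hη, hηS⟩ : ∃ η : ℝ, 0 < η ∧ η * S ≤ r/2 := by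
      refine ⟨r/(2*(S+1)), div_pos hr (by linarith), ?_⟩
      rw [div_mul_eq_mul_div, div_le_div_iff₀ (by linarith) (by norm_num)]
      linarith [hr.le]
    have h1η : 0 < 1 + 1/η := by
      have : 0 < 1/η := by positivity
      linarith
    have hrd : 0 < r/(2*(1+1/η)) := div_pos hr (by linarith)
    obtain ⟨δ, hδdef⟩ : ∃ x : ℝ, x = min (ε/4) (Real.sqrt (r/(2*(1+1/η)))) := ⟨_, rfl⟩
    have hδpos : 0 < δ := by
      rw [hδdef]; exact lt_min (by positivity) (Real.sqrt_pos.mpr hrd)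
    have hδ2a : δ ≤ ε/4 := by rw [hδdef]; exact min_le_left _ _
    have hδ2b : δ^2 ≤ r/(2*(1+1/η)) := by
      have h1 : δ ≤ Real.sqrt (r/(2*(1+1/η))) := by rw [hδdef]; exact min_le_right _ _
      have h2 : Real.sqrt (r/(2*(1+1/η))) ^ 2 = r/(2*(1+1/η)) := Real.sq_sqrt hrd.le
      nlinarith [hδpos.le, Real.sqrt_nonneg (r/(2*(1+1/η)))]
    refine ⟨δ, hδpos, fun ζ' hζ' hclose τ hτT => ?_⟩
    have hd : hMem (1/2 - s) (ζ' - ζ) := SBaux.hMem_sub hζ hζ'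
    have hAnn : (0:ℝ) ≤ ∑' k : ℕ, ((k:ℝ)+1) ^ (2*(1/2 - s)) * ‖(ζ' - ζ) k‖ ^ 2 :=
      tsum_nonneg fun k => by
        have := (SBaux.wpos (1/2 - s) k).le
        positivity
    have hA : (∑' k : ℕ, ((k:ℝ)+1) ^ (2*(1/2 - s)) * ‖(ζ' - ζ) k‖ ^ 2) < δ^2 :=
      (Real.sqrt_lt' hδpos).mp hclose
    obtain ⟨A, hAdef⟩ : ∃ x : ℝ, x = ∑' k : ℕ, ((k:ℝ)+1) ^ (2*(1/2 - s)) * ‖(ζ' - ζ) k‖ ^ 2 :=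
      ⟨_, rfl⟩
    rw [← hAdef] at hA hAnn
    obtain ⟨hQsum, hQle⟩ := SBaux.Q_le (t := 1/2 - s) hζ hζ' (η := η) hη
    have hQnn : (0:ℝ) ≤ ∑' j : ℕ, ((j:ℝ)+1) ^ (2*(1/2 - s)) * |‖ζ' j‖ ^ 2 - ‖ζ j‖ ^ 2| :=
      tsum_nonneg fun j => by
        have := (SBaux.wpos (1/2 - s) j).le
        positivity
    obtain ⟨Q, hQdef⟩ : ∃ x : ℝ, x = ∑' j : ℕ, ((j:ℝ)+1) ^ (2*(1/2 - s)) * |‖ζ' j‖ ^ 2 - ‖ζ j‖ ^ 2| :=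
      ⟨_, rfl⟩
    rw [← hQdef] at hQnn
    have hQle2 : Q ≤ η * S + (1 + 1/η) * A := by
      rw [hQdef, hSdef, hAdef, hFdef]
      exact hQle
    have hQr : Q < r := by
      have h2 : (1 + 1/η) * A < (1 + 1/η) * δ^2 := mul_lt_mul_of_pos_left hA h1η
      have h3 : (1 + 1/η) * δ^2 ≤ r/2 := by
        have := mul_le_mul_of_nonneg_left hδ2b h1η.le
        rw [show (1 + 1/η) * (r/(2*(1+1/η))) = r/2 by field_simp] at this
        exact this
      linarith
    have hQ2 : Q^2 < ε^2/(4*C) := by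
      rw [← hrsq]
      exact pow_lt_pow_left₀ hQr hQnn (by norm_num)
    have hΔω : ∀ k : ℕ, |omegaBO (k+1) ζ' - omegaBO (k+1) ζ| ≤ 2*((k:ℝ)+1)*Q := by
      intro k
      have h1 := SBaux.omega_diff (t := 1/2 - s) ht hζ hζ' (k+1)
      rw [← hQdef] at h1
      have he : ((k+1 : ℕ) : ℝ) = (k:ℝ)+1 := by push_cast; ring
      rw [he] at h1
      exact h1
    have hEnorm : ∀ k : ℕ, ‖Complex.exp (Complex.I * ((omegaBO (k+1) ζ' * τ : ℝ):ℂ))‖ = 1 :=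
      fun k => SBaux.norm_exp_I_mul _
    have hM2 : ∀ k : ℕ, ‖Complex.exp (Complex.I * ((omegaBO (k+1) ζ' * τ : ℝ):ℂ))
        - Complex.exp (Complex.I * ((omegaBO (k+1) ζ * τ : ℝ):ℂ))‖ ≤ 2 :=
      fun k => SBaux.norm_exp_sub_exp_le_two _ _
    have hMnn : ∀ k : ℕ, (0:ℝ) ≤ ‖Complex.exp (Complex.I * ((omegaBO (k+1) ζ' * τ : ℝ):ℂ))
        - Complex.exp (Complex.I * ((omegaBO (k+1) ζ * τ : ℝ):ℂ))‖ := fun k => norm_nonneg _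
    have hMQ : ∀ k : ℕ, ‖Complex.exp (Complex.I * ((omegaBO (k+1) ζ' * τ : ℝ):ℂ))
        - Complex.exp (Complex.I * ((omegaBO (k+1) ζ * τ : ℝ):ℂ))‖ ≤ 4*T*((k:ℝ)+1)*Q := by
      intro k
      have h0 := SBaux.norm_exp_sub_exp_le (omegaBO (k+1) ζ' * τ) (omegaBO (k+1) ζ * τ)
      have e1 : 2 * |omegaBO (k+1) ζ' * τ - omegaBO (k+1) ζ * τ|
          = 2 * |omegaBO (k+1) ζ' - omegaBO (k+1) ζ| * |τ| := by
        rw [show omegaBO (k+1) ζ' * τ - omegaBO (k+1) ζ * τ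
          = (omegaBO (k+1) ζ' - omegaBO (k+1) ζ) * τ by ring, abs_mul]
        ring
      rw [e1] at h0
      have h1 := hΔω k
      have hτnn : 0 ≤ |τ| := abs_nonneg τ
      have hkQ : (0:ℝ) ≤ 2*((k:ℝ)+1)*Q := by positivity
      have h2 : |omegaBO (k+1) ζ' - omegaBO (k+1) ζ| * |τ| ≤ (2*((k:ℝ)+1)*Q) * T :=
        mul_le_mul h1 hτT hτnn hkQ
      calc ‖Complex.exp (Complex.I * ((omegaBO (k+1) ζ' * τ : ℝ):ℂ))
          - Complex.exp (Complex.I * ((omegaBO (k+1) ζ * τ : ℝ):ℂ))‖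
          ≤ 2 * |omegaBO (k+1) ζ' - omegaBO (k+1) ζ| * |τ| := h0
        _ ≤ 2 * ((2*((k:ℝ)+1)*Q) * T) := by
            linarith [mul_le_mul_of_nonneg_left h2 (by norm_num : (0:ℝ) ≤ 2)]
        _ = 4*T*((k:ℝ)+1)*Q := by ring
    set B : ℕ → ℝ := fun k => F k * ‖Complex.exp (Complex.I * ((omegaBO (k+1) ζ' * τ : ℝ):ℂ))
        - Complex.exp (Complex.I * ((omegaBO (k+1) ζ * τ : ℝ):ℂ))‖ ^ 2 with hBdef
    have hBnn : ∀ k, 0 ≤ B k := fun k => mul_nonneg (hFnn k) (by positivity)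
    have hB4 : ∀ k, B k ≤ 4 * F k := by
      intro k
      have hsq : ‖Complex.exp (Complex.I * ((omegaBO (k+1) ζ' * τ : ℝ):ℂ))
          - Complex.exp (Complex.I * ((omegaBO (k+1) ζ * τ : ℝ):ℂ))‖ ^ 2 ≤ 4 := by
        calc ‖Complex.exp (Complex.I * ((omegaBO (k+1) ζ' * τ : ℝ):ℂ))
            - Complex.exp (Complex.I * ((omegaBO (k+1) ζ * τ : ℝ):ℂ))‖ ^ 2
            ≤ 2 ^ 2 := pow_le_pow_left₀ (hMnn k) (hM2 k) 2
          _ = 4 := by norm_num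
      have := mul_le_mul_of_nonneg_left hsq (hFnn k)
      rw [hBdef]
      dsimp only
      linarith
    have hBhead : ∀ k, B k ≤ F k * (4*T*((k:ℝ)+1)) ^ 2 * Q^2 := by
      intro k
      have hsq : ‖Complex.exp (Complex.I * ((omegaBO (k+1) ζ' * τ : ℝ):ℂ))
          - Complex.exp (Complex.I * ((omegaBO (k+1) ζ * τ : ℝ):ℂ))‖ ^ 2
          ≤ (4*T*((k:ℝ)+1)) ^ 2 * Q^2 := by
        have h4 := pow_le_pow_left₀ (hMnn k) (hMQ k) 2
        calc ‖Complex.exp (Complex.I * ((omegaBO (k+1) ζ' * τ : ℝ):ℂ))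
            - Complex.exp (Complex.I * ((omegaBO (k+1) ζ * τ : ℝ):ℂ))‖ ^ 2
            ≤ (4*T*((k:ℝ)+1)*Q) ^ 2 := h4
          _ = (4*T*((k:ℝ)+1)) ^ 2 * Q^2 := by ring
      have := mul_le_mul_of_nonneg_left hsq (hFnn k)
      rw [hBdef]
      dsimp only
      nlinarith
    clear_value B
    have hheadsum : ∑ k ∈ Finset.range N, B k ≤ ε^2/4 := by
      calc ∑ k ∈ Finset.range N, B k
          ≤ ∑ k ∈ Finset.range N, F k * (4*T*((k:ℝ)+1)) ^ 2 * Q^2 :=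
            Finset.sum_le_sum fun k _ => hBhead k
        _ = (∑ k ∈ Finset.range N, F k * (4*T*((k:ℝ)+1)) ^ 2) * Q^2 := by
            rw [← Finset.sum_mul]
        _ ≤ C * Q^2 := by rw [hCdef]; nlinarith [sq_nonneg Q]
        _ ≤ ε^2/4 := by
            calc C * Q^2 ≤ C * (ε^2/(4*C)) := mul_le_mul_of_nonneg_left hQ2.le hC.le
              _ = ε^2/4 := by field_simp
    have hBsum : Summable B := (hF.mul_left 4).of_nonneg_of_le hBnn hB4
    have hBtot : ∑' k, B k < ε^2/4 + 4*(ε^2/64) := SBaux.tsum_split_lt hF hBnn hB4 hheadsum hN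
    have hGle : ∀ k : ℕ, ((k:ℝ)+1) ^ (2*(1/2 - s)) * ‖(SBflow τ ζ' - SBflow τ ζ) k‖ ^ 2
        ≤ 2 * (((k:ℝ)+1) ^ (2*(1/2 - s)) * ‖(ζ' - ζ) k‖ ^ 2) + 2 * B k := by
      intro k
      have hw := (SBaux.wpos (1/2 - s) k).le
      have hd_eq : (SBflow τ ζ' - SBflow τ ζ) k
          = (ζ' k - ζ k) * Complex.exp (Complex.I * ((omegaBO (k+1) ζ' * τ : ℝ):ℂ))
            + ζ k * (Complex.exp (Complex.I * ((omegaBO (k+1) ζ' * τ : ℝ):ℂ))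
              - Complex.exp (Complex.I * ((omegaBO (k+1) ζ * τ : ℝ):ℂ))) := by
        simp only [Pi.sub_apply, SBflow]
        ring
      have hnorm : ‖(SBflow τ ζ' - SBflow τ ζ) k‖
          ≤ ‖ζ' k - ζ k‖ + ‖ζ k‖ * ‖Complex.exp (Complex.I * ((omegaBO (k+1) ζ' * τ : ℝ):ℂ))
            - Complex.exp (Complex.I * ((omegaBO (k+1) ζ * τ : ℝ):ℂ))‖ := by
        rw [hd_eq]
        calc ‖(ζ' k - ζ k) * Complex.exp (Complex.I * ((omegaBO (k+1) ζ' * τ : ℝ):ℂ))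
            + ζ k * (Complex.exp (Complex.I * ((omegaBO (k+1) ζ' * τ : ℝ):ℂ))
              - Complex.exp (Complex.I * ((omegaBO (k+1) ζ * τ : ℝ):ℂ)))‖
            ≤ ‖(ζ' k - ζ k) * Complex.exp (Complex.I * ((omegaBO (k+1) ζ' * τ : ℝ):ℂ))‖
              + ‖ζ k * (Complex.exp (Complex.I * ((omegaBO (k+1) ζ' * τ : ℝ):ℂ))
                - Complex.exp (Complex.I * ((omegaBO (k+1) ζ * τ : ℝ):ℂ)))‖ := norm_add_le _ _
          _ = ‖ζ' k - ζ k‖ + ‖ζ k‖ * ‖Complex.exp (Complex.I * ((omegaBO (k+1) ζ' * τ : ℝ):ℂ))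
              - Complex.exp (Complex.I * ((omegaBO (k+1) ζ * τ : ℝ):ℂ))‖ := by
              rw [norm_mul, norm_mul, hEnorm k, mul_one]
      have hcc : ‖(ζ' - ζ) k‖ = ‖ζ' k - ζ k‖ := by simp
      have h2 : ‖(SBflow τ ζ' - SBflow τ ζ) k‖ ^ 2
          ≤ 2 * ‖ζ' k - ζ k‖ ^ 2 + 2 * (‖ζ k‖ * ‖Complex.exp (Complex.I * ((omegaBO (k+1) ζ' * τ : ℝ):ℂ))
            - Complex.exp (Complex.I * ((omegaBO (k+1) ζ * τ : ℝ):ℂ))‖) ^ 2 := by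
        exact SBaux.sq_add_le (norm_nonneg _) (mul_nonneg (norm_nonneg _) (hMnn k))
          (norm_nonneg _) hnorm
      have h3 := mul_le_mul_of_nonneg_left h2 hw
      have hBk : B k = F k * ‖Complex.exp (Complex.I * ((omegaBO (k+1) ζ' * τ : ℝ):ℂ))
          - Complex.exp (Complex.I * ((omegaBO (k+1) ζ * τ : ℝ):ℂ))‖ ^ 2 := by rw [hBdef]
      have hFk : F k = ((k:ℝ)+1) ^ (2*(1/2 - s)) * ‖ζ k‖ ^ 2 := by rw [hFdef]
      rw [hcc, hBk, hFk]
      calc ((k:ℝ)+1) ^ (2*(1/2 - s)) * ‖(SBflow τ ζ' - SBflow τ ζ) k‖ ^ 2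
          ≤ ((k:ℝ)+1) ^ (2*(1/2 - s)) * (2 * ‖ζ' k - ζ k‖ ^ 2
            + 2 * (‖ζ k‖ * ‖Complex.exp (Complex.I * ((omegaBO (k+1) ζ' * τ : ℝ):ℂ))
              - Complex.exp (Complex.I * ((omegaBO (k+1) ζ * τ : ℝ):ℂ))‖) ^ 2) := h3
        _ = 2 * (((k:ℝ)+1) ^ (2*(1/2 - s)) * ‖ζ' k - ζ k‖ ^ 2)
            + 2 * (((k:ℝ)+1) ^ (2*(1/2 - s)) * ‖ζ k‖ ^ 2 * ‖Complex.exp (Complex.I * ((omegaBO (k+1) ζ' * τ : ℝ):ℂ))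
              - Complex.exp (Complex.I * ((omegaBO (k+1) ζ * τ : ℝ):ℂ))‖ ^ 2) := by ring
    have hsumR : Summable fun k : ℕ =>
        2 * (((k:ℝ)+1) ^ (2*(1/2 - s)) * ‖(ζ' - ζ) k‖ ^ 2) + 2 * B k :=
      (hd.mul_left 2).add (hBsum.mul_left 2)
    have hGsum : Summable fun k : ℕ =>
        ((k:ℝ)+1) ^ (2*(1/2 - s)) * ‖(SBflow τ ζ' - SBflow τ ζ) k‖ ^ 2 :=
      hsumR.of_nonneg_of_le (fun k => by
        have := (SBaux.wpos (1/2 - s) k).le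
        positivity) hGle
    have hGtot : (∑' k : ℕ, ((k:ℝ)+1) ^ (2*(1/2 - s)) * ‖(SBflow τ ζ' - SBflow τ ζ) k‖ ^ 2)
        ≤ 2 * A + 2 * ∑' k, B k := by
      calc ∑' k : ℕ, ((k:ℝ)+1) ^ (2*(1/2 - s)) * ‖(SBflow τ ζ' - SBflow τ ζ) k‖ ^ 2
          ≤ ∑' k : ℕ, (2 * (((k:ℝ)+1) ^ (2*(1/2 - s)) * ‖(ζ' - ζ) k‖ ^ 2) + 2 * B k) :=
            Summable.tsum_le_tsum hGle hGsum hsumR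
        _ = 2 * A + 2 * ∑' k, B k := by
            rw [Summable.tsum_add (hd.mul_left 2) (hBsum.mul_left 2), tsum_mul_left, tsum_mul_left, hAdef]
    have hδsq : δ^2 ≤ ε^2/16 := by
      have := pow_le_pow_left₀ hδpos.le hδ2a 2
      calc δ^2 ≤ (ε/4)^2 := this
        _ = ε^2/16 := by ring
    have hfin : (∑' k : ℕ, ((k:ℝ)+1) ^ (2*(1/2 - s)) * ‖(SBflow τ ζ' - SBflow τ ζ) k‖ ^ 2)
        < ε^2 := by linarith [pow_pos hε 2]
    exact (Real.sqrt_lt' hε).mpr hfin
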